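/- Let T be a finite tree with maximum degree at most 4 and φ an s-model of T. If the ordered edge (p,v) of T is critical in φ, then b(T) ≥ b^ℓ_φ(p,v). -/

import Mathlib

open SimpleGraph

/-- The closed axis-parallel grid segment (bounding box) with corners `p` and `q`.
For axis-aligned `p`, `q` this is exactly the straight segment joining them. -/
def seg (p q : ℤ × ℤ) : Set (ℤ × ℤ) :=
  {r | r.1 ∈ Set.uIcc p.1 q.1 ∧ r.2 ∈ Set.uIcc p.2 q.2}

/-- A straight model (s-model) of a graph `G`: an injective drawing of the vertices on the
grid `ℤ × ℤ` such that every edge is a horizontal or vertical straight segment, and segments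
of distinct edges meet only at the image of a common endpoint. -/
structure SModel {V : Type*} (G : SimpleGraph V) where
  toFun : V → ℤ × ℤ
  inj : Function.Injective toFun
  axisAligned : ∀ ⦃u v : V⦄, G.Adj u v →
    ((toFun u).1 = (toFun v).1 ∧ (toFun u).2 ≠ (toFun v).2) ∨
    ((toFun u).2 = (toFun v).2 ∧ (toFun u).1 ≠ (toFun v).1)
  noCross : ∀ ⦃u v x y : V⦄, G.Adj u v → G.Adj x y → s(u, v) ≠ s(x, y) →
    ∀ r ∈ seg (toFun u) (toFun v) ∩ seg (toFun x) (toFun y),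
      ∃ w : V, (w = u ∨ w = v) ∧ (w = x ∨ w = y) ∧ toFun w = r

/-- The drawing `φ` bends at `b` when passing `a, b, c`: one of the two segments is
vertical and the other horizontal. -/
def bendAt {V : Type*} (φ : V → ℤ × ℤ) (a b c : V) : Prop :=
  ((φ a).1 = (φ b).1 ∧ (φ b).2 = (φ c).2) ∨
  ((φ a).2 = (φ b).2 ∧ (φ b).1 = (φ c).1)

instance {V : Type*} (φ : V → ℤ × ℤ) (a b c : V) : Decidable (bendAt φ a b c) := by
  unfold bendAt; infer_instance

/-- The list of internal vertices, in order, at which the drawing of the given vertex list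
bends. -/
def bendVertices {V : Type*} (φ : V → ℤ × ℤ) : List V → List V
  | a :: b :: c :: rest =>
      (if bendAt φ a b c then [b] else []) ++ bendVertices φ (b :: c :: rest)
  | _ => []

/-- The number of bends of (the drawing of) a vertex list. -/
def bends {V : Type*} (φ : V → ℤ × ℤ) (L : List V) : ℕ :=
  (bendVertices φ L).length

section Defs

variable {V : Type*} [Fintype V]

/-- `b(φ)`: the maximum number of bends over all leaf-to-leaf paths (0 if there are none). -/
noncomputable def bendNum {G : SimpleGraph V} [DecidableRel G.Adj] (M : SModel G) : ℕ :=
  sSup {n | ∃ (a b : V) (W : G.Walk a b), W.IsPath ∧ G.degree a = 1 ∧ G.degree b = 1 ∧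
    bends M.toFun W.support = n}

/-- `b(T)`: the minimum of `b(φ)` over all s-models `φ`. -/
noncomputable def treeBendNum (G : SimpleGraph V) [DecidableRel G.Adj] : ℕ :=
  sInf {n | ∃ M : SModel G, bendNum M = n}

/-- `b^ℓ_φ(p, v)`: the maximum number of bends over all paths from `p` to a leaf that
contain `v`. -/
noncomputable def leafBend {G : SimpleGraph V} [DecidableRel G.Adj] (M : SModel G)
    (p v : V) : ℕ :=
  sSup {n | ∃ (f : V) (W : G.Walk p f), W.IsPath ∧ G.degree f = 1 ∧ v ∈ W.support ∧
    bends M.toFun W.support = n}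

/-- `b^ℓ_T(p, v)`: the minimum of `b^ℓ_φ(p, v)` over all s-models `φ`. -/
noncomputable def leafBendMin (G : SimpleGraph V) [DecidableRel G.Adj] (p v : V) : ℕ :=
  sInf {n | ∃ M : SModel G, leafBend M p v = n}

/-- `b_φ(v)`: the maximum number of bends over all leaf-to-leaf paths containing `v`. -/
noncomputable def bendNumAt {G : SimpleGraph V} [DecidableRel G.Adj] (M : SModel G)
    (v : V) : ℕ :=
  sSup {n | ∃ (a b : V) (W : G.Walk a b), W.IsPath ∧ G.degree a = 1 ∧ G.degree b = 1 ∧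
    v ∈ W.support ∧ bends M.toFun W.support = n}

/-- `p`, `q`, `r` lie on a common horizontal or vertical grid line. -/
def collinearGrid (p q r : ℤ × ℤ) : Prop :=
  (p.1 = q.1 ∧ q.1 = r.1) ∨ (p.2 = q.2 ∧ q.2 = r.2)

/-- `v` is balanced in the s-model `M`: either it has degree at most 1, or two neighbors
realizing the two largest values of `b^ℓ_M(v, ·)` are drawn collinearly with `v`. -/
def BalancedAt {G : SimpleGraph V} [DecidableRel G.Adj] (M : SModel G) (v : V) : Prop :=
  G.degree v ≤ 1 ∨
  ∃ u1 u2 : V, u1 ≠ u2 ∧ G.Adj v u1 ∧ G.Adj v u2 ∧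
    collinearGrid (M.toFun u1) (M.toFun v) (M.toFun u2) ∧
    ∀ w : V, G.Adj v w → w ≠ u1 → w ≠ u2 →
      leafBend M v w ≤ min (leafBend M v u1) (leafBend M v u2)

/-- The value `b^ℓ_M(v, u)` of a real or virtual (`none`) neighbor `u` of `v`; virtual
neighbors have value `-1`. -/
noncomputable def optVal {G : SimpleGraph V} [DecidableRel G.Adj] (M : SModel G) (v : V) :
    Option V → ℤ
  | none => -1
  | some u => (leafBend M v u : ℤ)

/-- `u1` and `u2` are the first two entries of a nonincreasing (w.r.t. `b^ℓ_M(v, ·)`)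
ordering of the real neighbors of `v` other than `p`, padded at the end with virtual
neighbors `none`. -/
def TopTwo {G : SimpleGraph V} [DecidableRel G.Adj] (M : SModel G) (p v : V) :
    Option V → Option V → Prop
  | none, u2 => u2 = none ∧ ∀ w, G.Adj v w → w = p
  | some a, none => G.Adj v a ∧ a ≠ p ∧ ∀ w, G.Adj v w → w ≠ p → w = a
  | some a, some b => G.Adj v a ∧ a ≠ p ∧ G.Adj v b ∧ b ≠ p ∧ a ≠ b ∧
      leafBend M v b ≤ leafBend M v a ∧
      ∀ w, G.Adj v w → w ≠ p → w ≠ a → w ≠ b → leafBend M v w ≤ leafBend M v b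

/-- Criticality of an ordered pair in an s-model `M`: every pair `(p, ∅)` is critical, and an
ordered edge `(p, v)` is critical if, for the first two entries `u1, u2` of some nonincreasing
ordering of the other neighbors of `v`, either `b^ℓ_M(p,v) = b^1` and `(v, u1)` is critical, or
`b^ℓ_M(p,v) = b^2 + 1` and both `(v, u1)` and `(v, u2)` are critical. -/
inductive Critical {G : SimpleGraph V} [DecidableRel G.Adj] (M : SModel G) :
    V → Option V → Prop
  | base (p : V) : Critical M p none
  | top1 (p v : V) (u1 u2 : Option V) (hadj : G.Adj p v)
      (htop : TopTwo M p v u1 u2)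
      (hb : (leafBend M p v : ℤ) = optVal M v u1)
      (hc : Critical M v u1) : Critical M p (some v)
  | top2 (p v : V) (u1 u2 : Option V) (hadj : G.Adj p v)
      (htop : TopTwo M p v u1 u2)
      (hb : (leafBend M p v : ℤ) = optVal M v u2 + 1)
      (hc1 : Critical M v u1) (hc2 : Critical M v u2) : Critical M p (some v)

end Defs

/-- Membership in the class of trees of the statement: a tree with maximum degree at most 4
having a vertex `r` of degree exactly 2 with distinct neighbors `r1`, `r2`, admitting a
balanced s-model `M` with `b^ℓ_M(r,r1) = b^ℓ_M(r,r2) = k - 1`. -/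
def ClassProp (k : ℕ) (V : Type) [Fintype V] (G : SimpleGraph V)
    [DecidableRel G.Adj] : Prop :=
  G.IsTree ∧ (∀ v, G.degree v ≤ 4) ∧
  ∃ (r r1 r2 : V) (M : SModel G),
    G.degree r = 2 ∧ G.Adj r r1 ∧ G.Adj r r2 ∧ r1 ≠ r2 ∧
    (∀ v, BalancedAt M v) ∧ leafBend M r r1 = k - 1 ∧ leafBend M r r2 = k - 1

/-- The full binary tree of height `k`, with vertex set the lists over `Bool` of length at
most `k`, rooted at the empty list; children of `l` are the lists `c :: l`. -/
def fullBinTree (k : ℕ) : SimpleGraph {l : List Bool // l.length ≤ k} :=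
  SimpleGraph.fromRel (fun a b => ∃ c : Bool, (b : List Bool) = c :: (a : List Bool))

/-- A tree with maximum degree at most 4 and minimum bend number `k`. -/
def TreeProp (k : ℕ) (V : Type) [Fintype V] (G : SimpleGraph V)
    [DecidableRel G.Adj] : Prop :=
  G.IsTree ∧ (∀ v, G.degree v ≤ 4) ∧ treeBendNum G = k

/-- The grid graph on `ℤ × ℤ`: two grid points are adjacent iff their distance is 1. -/
def gridGraph : SimpleGraph (ℤ × ℤ) :=
  SimpleGraph.fromRel (fun p q =>
    (p.1 = q.1 ∧ (p.2 - q.2).natAbs = 1) ∨ (p.2 = q.2 ∧ (p.1 - q.1).natAbs = 1))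

/-- `G` is a `B_k`-EPG graph: it has an EPG model by grid paths each with at most `k` bends;
distinct vertices are adjacent iff the corresponding grid paths share a grid edge. -/
def IsBkEPG {X : Type*} (G : SimpleGraph X) (k : ℕ) : Prop :=
  ∃ (s t : X → ℤ × ℤ) (P : ∀ x : X, gridGraph.Walk (s x) (t x)),
    (∀ x, (P x).IsPath) ∧ (∀ x, bends (id : ℤ × ℤ → ℤ × ℤ) (P x).support ≤ k) ∧
    ∀ x y : X, x ≠ y → (G.Adj x y ↔ ∃ e, e ∈ (P x).edges ∧ e ∈ (P y).edges)

/-- `⟨T, (Q x)_{x}⟩` is a VPT model of `G`: the `Q x` are pairwise distinct paths of the host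
tree `T`, and distinct vertices of `G` are adjacent iff their paths share a vertex of `T`. -/
def IsVPTModel {X W : Type*} (G : SimpleGraph X) (T : SimpleGraph W)
    (s t : X → W) (Q : ∀ x : X, T.Walk (s x) (t x)) : Prop :=
  (∀ x, (Q x).IsPath) ∧
  (∀ x y : X, x ≠ y → {w : W | w ∈ (Q x).support} ≠ {w : W | w ∈ (Q y).support}) ∧
  (∀ x y : X, x ≠ y → (G.Adj x y ↔ ∃ w : W, w ∈ (Q x).support ∧ w ∈ (Q y).support))

/-- A host tree with maximum degree at most 3 and minimum bend number `k`. -/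
def HostProp (k : ℕ) (W : Type) [Fintype W] (T : SimpleGraph W)
    [DecidableRel T.Adj] : Prop :=
  T.IsTree ∧ (∀ v, T.degree v ≤ 3) ∧ treeBendNum T = k

section AuxProof

open SimpleGraph Walk

variable {V : Type*}

/-- Head-bend indicator. -/
private def hbend (φ : V → ℤ × ℤ) (a : V) : List V → ℕ
  | b :: c :: _ => if bendAt φ a b c then 1 else 0
  | _ => 0

private lemma bends_cons (φ : V → ℤ × ℤ) (a : V) (l : List V) :
    bends φ (a :: l) = hbend φ a l + bends φ l := by
  match l with
  | [] => simp [bends, bendVertices, hbend]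
  | [b] => simp [bends, bendVertices, hbend]
  | b :: c :: r =>
    simp only [bends, bendVertices, hbend, List.length_append]
    split <;> simp

private lemma hbend_le_one (φ : V → ℤ × ℤ) (a : V) (l : List V) : hbend φ a l ≤ 1 := by
  match l with
  | [] => simp [hbend]
  | [b] => simp [hbend]
  | b :: c :: r => simp only [hbend]; split <;> simp

private lemma bends_le_length (φ : V → ℤ × ℤ) (l : List V) : bends φ l ≤ l.length := by
  induction l with
  | nil => simp [bends, bendVertices]
  | cons a t ih =>
    rw [bends_cons]
    have := hbend_le_one φ a t
    simp only [List.length_cons]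
    omega

private lemma bends_le_cons (φ : V → ℤ × ℤ) (a : V) (l : List V) :
    bends φ l ≤ bends φ (a :: l) := by
  rw [bends_cons]; omega

private lemma bends_suffix (φ : V → ℤ × ℤ) (l1 l2 : List V) :
    bends φ l2 ≤ bends φ (l1 ++ l2) := by
  induction l1 with
  | nil => simp
  | cons a t ih => exact ih.trans (bends_le_cons φ a (t ++ l2))

private lemma hbend_prefix (φ : V → ℤ × ℤ) (a : V) (t l2 : List V) :
    hbend φ a t ≤ hbend φ a (t ++ l2) := by
  match t with
  | [] => simp [hbend]
  | [b] => simp [hbend]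
  | b :: c :: r => simp [hbend]

private lemma bends_prefix (φ : V → ℤ × ℤ) (l1 l2 : List V) :
    bends φ l1 ≤ bends φ (l1 ++ l2) := by
  induction l1 with
  | nil => simp [bends, bendVertices]
  | cons a t ih =>
    rw [List.cons_append, bends_cons, bends_cons]
    exact Nat.add_le_add (hbend_prefix φ a t l2) ih

variable {G : SimpleGraph V}

private lemma eq_cons_of_mem (hT : G.IsTree) {v c f : V} (h : G.Adj v c)
    (W : G.Walk v f) (hW : W.IsPath) (hc : c ∈ W.support) :
    ∃ D : G.Walk c f, W = Walk.cons h D := by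
  classical
  have hU : (W.takeUntil c hc).IsPath := hW.takeUntil hc
  have hE : (Walk.cons h Walk.nil : G.Walk v c).IsPath := by simp [h.ne]
  have heq : W.takeUntil c hc = Walk.cons h Walk.nil :=
    (hT.existsUnique_path v c).unique hU hE
  refine ⟨W.dropUntil c hc, ?_⟩
  conv_lhs => rw [← W.take_spec hc]
  rw [heq, Walk.cons_append, Walk.nil_append]

private lemma snd_unique (hT : G.IsTree) {v f : V} {W : G.Walk v f} (hW : W.IsPath)
    {x y : V} (hx : G.Adj v x) (hy : G.Adj v y)
    (hxW : x ∈ W.support) (hyW : y ∈ W.support) : x = y := by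
  obtain ⟨D1, e1⟩ := eq_cons_of_mem hT hx W hW hxW
  obtain ⟨D2, e2⟩ := eq_cons_of_mem hT hy W hW hyW
  have h12 : D1.support = D2.support := by
    have := congrArg Walk.support (e1.symm.trans e2)
    simpa [Walk.support_cons] using this
  rw [D1.support_eq_cons, D2.support_eq_cons] at h12
  exact (List.cons_eq_cons.mp h12).1

private lemma start_not_mem (hT : G.IsTree) {p v f : V} (hpv : G.Adj p v)
    {W : G.Walk v f} (hW : W.IsPath) {a : V} (ha : G.Adj v a) (hap : a ≠ p)
    (haW : a ∈ W.support) : p ∉ W.support := by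
  intro hp
  exact hap (snd_unique hT hW ha hpv.symm haW hp)

private lemma exists_extension [Fintype V] [DecidableRel G.Adj] (hT : G.IsTree) :
    ∀ (n : ℕ) {v f : V} (W : G.Walk v f), W.IsPath → ¬W.Nil →
      Fintype.card V - W.length ≤ n →
      ∃ (g : V) (X : G.Walk f g), (W.append X).IsPath ∧ G.degree g = 1 := by
  intro n
  induction n with
  | zero =>
    intro v f W hW hnn hle
    exact absurd hW.length_lt (by omega)
  | succ n ih =>
    intro v f W hW hnn hle
    classical
    by_cases hdf : G.degree f = 1
    · exact ⟨f, Walk.nil, by rwa [Walk.append_nil], hdf⟩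
    · have hWr : W.reverse.IsPath := hW.reverse
      have hnnr : ¬W.reverse.Nil := by
        rw [Walk.not_nil_iff_lt_length, Walk.length_reverse]
        rwa [Walk.not_nil_iff_lt_length] at hnn
      obtain ⟨y0, h0, Q, hQ⟩ := Walk.not_nil_iff.mp hnnr
      have hy0mem : y0 ∈ W.reverse.support := by
        rw [hQ, Walk.support_cons]
        exact List.mem_cons_of_mem _ Q.start_mem_support
      have hdf2 : 1 < G.degree f := by
        have : 0 < G.degree f := (SimpleGraph.degree_pos_iff_exists_adj (G := G) (v := f)).mpr ⟨y0, h0⟩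
        omega
      obtain ⟨x, hxmem, hxy0⟩ := Finset.exists_mem_ne
        (by rwa [G.card_neighborFinset_eq_degree]) y0
      have hx : G.Adj f x := by rwa [G.mem_neighborFinset] at hxmem
      have hxW : x ∉ W.support := by
        intro hmem
        have hmemr : x ∈ W.reverse.support := by
          rwa [Walk.support_reverse, List.mem_reverse]
        exact hxy0 (snd_unique hT hWr hx h0 hmemr hy0mem)
      have hWE : (W.append (Walk.cons hx Walk.nil)).IsPath := by
        rw [Walk.isPath_def, Walk.support_append]
        simp only [Walk.support_cons, Walk.support_nil, List.tail_cons]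
        rw [List.nodup_append]
        exact ⟨hW.support_nodup, List.nodup_singleton x, by
          intro z hz b hb; rw [List.mem_singleton] at hb; rw [hb]; rintro rfl; exact hxW hz⟩
      have hnn' : ¬(W.append (Walk.cons hx Walk.nil)).Nil := by
        rw [Walk.not_nil_iff_lt_length, Walk.length_append]
        simp
      obtain ⟨g, X, hX, hg⟩ := ih (W.append (Walk.cons hx Walk.nil)) hWE hnn' (by
        rw [Walk.length_append]
        simp only [Walk.length_cons, Walk.length_nil]
        omega)
      exact ⟨g, (Walk.cons hx Walk.nil).append X, by rw [Walk.append_assoc]; exact hX, hg⟩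

end AuxProof
section AuxProof2

open SimpleGraph Walk

variable {V : Type*} [Fintype V] {G : SimpleGraph V} [DecidableRel G.Adj]

private lemma leafBend_bdd (N : SModel G) (p v : V) :
    BddAbove {n | ∃ (f : V) (W : G.Walk p f), W.IsPath ∧ G.degree f = 1 ∧ v ∈ W.support ∧
      bends N.toFun W.support = n} := by
  refine ⟨Fintype.card V, ?_⟩
  rintro n ⟨f, W, hW, -, -, rfl⟩
  have h1 := hW.length_lt
  have h2 := bends_le_length N.toFun W.support
  rw [Walk.length_support] at h2
  omega

private lemma le_leafBend (N : SModel G) {p v : V} {n : ℕ}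
    (h : ∃ (f : V) (W : G.Walk p f), W.IsPath ∧ G.degree f = 1 ∧ v ∈ W.support ∧
      bends N.toFun W.support = n) : n ≤ leafBend N p v := by
  unfold leafBend
  exact le_csSup (leafBend_bdd N p v) h

private lemma leafBend_spec (hT : G.IsTree) (N : SModel G) {p v : V} (hpv : G.Adj p v) :
    ∃ (f : V) (W : G.Walk p f), W.IsPath ∧ G.degree f = 1 ∧ v ∈ W.support ∧
      bends N.toFun W.support = leafBend N p v := by
  have hE : (Walk.cons hpv Walk.nil : G.Walk p v).IsPath := by simp [hpv.ne]
  obtain ⟨g, X, hgood, hdeg⟩ := exists_extension hT (Fintype.card V)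
    (Walk.cons hpv Walk.nil) hE Walk.not_nil_cons (Nat.sub_le _ _)
  have hne : Set.Nonempty {n | ∃ (f : V) (W : G.Walk p f), W.IsPath ∧ G.degree f = 1 ∧
      v ∈ W.support ∧ bends N.toFun W.support = n} := by
    refine ⟨bends N.toFun (((Walk.cons hpv Walk.nil).append X).support),
      g, (Walk.cons hpv Walk.nil).append X, hgood, hdeg, ?_, rfl⟩
    exact Walk.subset_support_append_left _ _ (by simp)
  unfold leafBend
  exact Nat.sSup_mem hne (leafBend_bdd N p v)

private lemma no_overlap_vert (N : SModel G) {v x y : V}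
    (hx : G.Adj v x) (hy : G.Adj v y) (hxy : x ≠ y)
    (h1 : (N.toFun v).1 = (N.toFun x).1) (h2 : (N.toFun v).1 = (N.toFun y).1)
    (hside : ((N.toFun v).2 < (N.toFun x).2 ∧ (N.toFun v).2 < (N.toFun y).2) ∨
      ((N.toFun x).2 < (N.toFun v).2 ∧ (N.toFun y).2 < (N.toFun v).2)) : False := by
  set s : ℤ := if (N.toFun v).2 < (N.toFun x).2 then 1 else -1 with hs
  have hs' : (s = 1 ∧ (N.toFun v).2 < (N.toFun x).2 ∧ (N.toFun v).2 < (N.toFun y).2) ∨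
      (s = -1 ∧ (N.toFun x).2 < (N.toFun v).2 ∧ (N.toFun y).2 < (N.toFun v).2) := by
    rcases hside with ⟨ha, hb⟩ | ⟨ha, hb⟩
    · exact Or.inl ⟨by rw [hs, if_pos ha], ha, hb⟩
    · exact Or.inr ⟨by rw [hs, if_neg (by omega)], ha, hb⟩
  have hne : s(v, x) ≠ s(v, y) := by
    intro h
    rcases Sym2.eq_iff.mp h with ⟨-, h'⟩ | ⟨h', -⟩
    · exact hxy h'
    · exact hy.ne h'
  have hrx : ((N.toFun v).1, (N.toFun v).2 + s) ∈ seg (N.toFun v) (N.toFun x) := by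
    refine ⟨Set.left_mem_uIcc, ?_⟩
    rw [Set.mem_uIcc]
    rcases hs' with ⟨h, ha, hb⟩ | ⟨h, ha, hb⟩ <;> rw [h] <;> omega
  have hry : ((N.toFun v).1, (N.toFun v).2 + s) ∈ seg (N.toFun v) (N.toFun y) := by
    refine ⟨by rw [← h2]; exact Set.left_mem_uIcc, ?_⟩
    rw [Set.mem_uIcc]
    rcases hs' with ⟨h, ha, hb⟩ | ⟨h, ha, hb⟩ <;> rw [h] <;> omega
  obtain ⟨w, hw1, hw2, hw3⟩ := N.noCross hx hy hne _ ⟨hrx, hry⟩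
  have hwv : w ≠ v := by
    rintro rfl
    have := congrArg Prod.snd hw3
    simp only at this
    rcases hs' with ⟨h, -, -⟩ | ⟨h, -, -⟩ <;> rw [h] at this <;> omega
  rcases hw1 with rfl | rfl
  · exact hwv rfl
  · rcases hw2 with h | h
    · exact hwv h
    · exact hxy h

private lemma no_overlap_horiz (N : SModel G) {v x y : V}
    (hx : G.Adj v x) (hy : G.Adj v y) (hxy : x ≠ y)
    (h1 : (N.toFun v).2 = (N.toFun x).2) (h2 : (N.toFun v).2 = (N.toFun y).2)
    (hside : ((N.toFun v).1 < (N.toFun x).1 ∧ (N.toFun v).1 < (N.toFun y).1) ∨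
      ((N.toFun x).1 < (N.toFun v).1 ∧ (N.toFun y).1 < (N.toFun v).1)) : False := by
  set s : ℤ := if (N.toFun v).1 < (N.toFun x).1 then 1 else -1 with hs
  have hs' : (s = 1 ∧ (N.toFun v).1 < (N.toFun x).1 ∧ (N.toFun v).1 < (N.toFun y).1) ∨
      (s = -1 ∧ (N.toFun x).1 < (N.toFun v).1 ∧ (N.toFun y).1 < (N.toFun v).1) := by
    rcases hside with ⟨ha, hb⟩ | ⟨ha, hb⟩
    · exact Or.inl ⟨by rw [hs, if_pos ha], ha, hb⟩
    · exact Or.inr ⟨by rw [hs, if_neg (by omega)], ha, hb⟩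
  have hne : s(v, x) ≠ s(v, y) := by
    intro h
    rcases Sym2.eq_iff.mp h with ⟨-, h'⟩ | ⟨h', -⟩
    · exact hxy h'
    · exact hy.ne h'
  have hrx : ((N.toFun v).1 + s, (N.toFun v).2) ∈ seg (N.toFun v) (N.toFun x) := by
    refine ⟨?_, Set.left_mem_uIcc⟩
    rw [Set.mem_uIcc]
    rcases hs' with ⟨h, ha, hb⟩ | ⟨h, ha, hb⟩ <;> rw [h] <;> omega
  have hry : ((N.toFun v).1 + s, (N.toFun v).2) ∈ seg (N.toFun v) (N.toFun y) := by
    refine ⟨?_, by rw [← h2]; exact Set.left_mem_uIcc⟩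
    rw [Set.mem_uIcc]
    rcases hs' with ⟨h, ha, hb⟩ | ⟨h, ha, hb⟩ <;> rw [h] <;> omega
  obtain ⟨w, hw1, hw2, hw3⟩ := N.noCross hx hy hne _ ⟨hrx, hry⟩
  have hwv : w ≠ v := by
    rintro rfl
    have := congrArg Prod.fst hw3
    simp only at this
    rcases hs' with ⟨h, -, -⟩ | ⟨h, -, -⟩ <;> rw [h] at this <;> omega
  rcases hw1 with rfl | rfl
  · exact hwv rfl
  · rcases hw2 with h | h
    · exact hwv h
    · exact hxy h

private lemma no_three_vert (N : SModel G) {v x y z : V}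
    (hx : G.Adj v x) (hy : G.Adj v y) (hz : G.Adj v z)
    (hxy : x ≠ y) (hxz : x ≠ z) (hyz : y ≠ z)
    (h1 : (N.toFun v).1 = (N.toFun x).1) (h2 : (N.toFun v).1 = (N.toFun y).1)
    (h3 : (N.toFun v).1 = (N.toFun z).1) : False := by
  have dx : (N.toFun v).2 ≠ (N.toFun x).2 := by
    rcases N.axisAligned hx with ⟨-, h⟩ | ⟨-, h⟩
    · exact h
    · exact absurd h1 h
  have dy : (N.toFun v).2 ≠ (N.toFun y).2 := by
    rcases N.axisAligned hy with ⟨-, h⟩ | ⟨-, h⟩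
    · exact h
    · exact absurd h2 h
  have dz : (N.toFun v).2 ≠ (N.toFun z).2 := by
    rcases N.axisAligned hz with ⟨-, h⟩ | ⟨-, h⟩
    · exact h
    · exact absurd h3 h
  rcases dx.lt_or_gt with hX | hX <;> rcases dy.lt_or_gt with hY | hY <;>
    rcases dz.lt_or_gt with hZ | hZ
  · exact no_overlap_vert N hx hy hxy h1 h2 (Or.inl ⟨hX, hY⟩)
  · exact no_overlap_vert N hx hy hxy h1 h2 (Or.inl ⟨hX, hY⟩)
  · exact no_overlap_vert N hx hz hxz h1 h3 (Or.inl ⟨hX, hZ⟩)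
  · exact no_overlap_vert N hy hz hyz h2 h3 (Or.inr ⟨hY, hZ⟩)
  · exact no_overlap_vert N hy hz hyz h2 h3 (Or.inl ⟨hY, hZ⟩)
  · exact no_overlap_vert N hx hz hxz h1 h3 (Or.inr ⟨hX, hZ⟩)
  · exact no_overlap_vert N hx hy hxy h1 h2 (Or.inr ⟨hX, hY⟩)
  · exact no_overlap_vert N hx hy hxy h1 h2 (Or.inr ⟨hX, hY⟩)

private lemma no_three_horiz (N : SModel G) {v x y z : V}
    (hx : G.Adj v x) (hy : G.Adj v y) (hz : G.Adj v z)
    (hxy : x ≠ y) (hxz : x ≠ z) (hyz : y ≠ z)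
    (h1 : (N.toFun v).2 = (N.toFun x).2) (h2 : (N.toFun v).2 = (N.toFun y).2)
    (h3 : (N.toFun v).2 = (N.toFun z).2) : False := by
  have dx : (N.toFun v).1 ≠ (N.toFun x).1 := by
    rcases N.axisAligned hx with ⟨h, h'⟩ | ⟨-, h⟩
    · exact absurd h1 h'
    · exact h
  have dy : (N.toFun v).1 ≠ (N.toFun y).1 := by
    rcases N.axisAligned hy with ⟨h, h'⟩ | ⟨-, h⟩
    · exact absurd h2 h'
    · exact h
  have dz : (N.toFun v).1 ≠ (N.toFun z).1 := by
    rcases N.axisAligned hz with ⟨h, h'⟩ | ⟨-, h⟩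
    · exact absurd h3 h'
    · exact h
  rcases dx.lt_or_gt with hX | hX <;> rcases dy.lt_or_gt with hY | hY <;>
    rcases dz.lt_or_gt with hZ | hZ
  · exact no_overlap_horiz N hx hy hxy h1 h2 (Or.inl ⟨hX, hY⟩)
  · exact no_overlap_horiz N hx hy hxy h1 h2 (Or.inl ⟨hX, hY⟩)
  · exact no_overlap_horiz N hx hz hxz h1 h3 (Or.inl ⟨hX, hZ⟩)
  · exact no_overlap_horiz N hy hz hyz h2 h3 (Or.inr ⟨hY, hZ⟩)
  · exact no_overlap_horiz N hy hz hyz h2 h3 (Or.inl ⟨hY, hZ⟩)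
  · exact no_overlap_horiz N hx hz hxz h1 h3 (Or.inr ⟨hX, hZ⟩)
  · exact no_overlap_horiz N hx hy hxy h1 h2 (Or.inr ⟨hX, hY⟩)
  · exact no_overlap_horiz N hx hy hxy h1 h2 (Or.inr ⟨hX, hY⟩)

end AuxProof2
section AuxProof3

open SimpleGraph Walk

set_option linter.unusedSectionVars false

variable {V : Type*} [Fintype V] {G : SimpleGraph V} [DecidableRel G.Adj]

private lemma critical_le (hT : G.IsTree) {M : SModel G} {p : V} {ov : Option V}
    (hcrit : Critical M p ov) :
    ∀ v, ov = some v → ∀ N : SModel G, leafBend M p v ≤ leafBend N p v := by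
  induction hcrit with
  | base q => intro v h; exact absurd h (by simp)
  | top1 p v u1 u2 hadj htop hb hc ih =>
    rintro v' hv' N
    obtain rfl : v = v' := by injection hv'
    match u1 with
    | none =>
      exfalso
      simp only [optVal] at hb
      omega
    | some a =>
      simp only [optVal] at hb
      have hk : leafBend M p v = leafBend M v a := by exact_mod_cast hb
      obtain ⟨hva, hap⟩ : G.Adj v a ∧ a ≠ p := by
        match u2 with
        | none => exact ⟨htop.1, htop.2.1⟩
        | some b => exact ⟨htop.1, htop.2.1⟩
      have h1 : leafBend M v a ≤ leafBend N v a := ih a rfl N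
      have h2 : leafBend N v a ≤ leafBend N p v := by
        obtain ⟨f, W, hWp, hf, haW, hbends⟩ := leafBend_spec hT N hva
        have hpW : p ∉ W.support := start_not_mem hT hadj hWp hva hap haW
        calc leafBend N v a = bends N.toFun W.support := hbends.symm
          _ ≤ bends N.toFun (p :: W.support) := bends_le_cons _ _ _
          _ ≤ leafBend N p v := by
            refine le_leafBend N ⟨f, Walk.cons hadj W, hWp.cons hpW, hf, ?_, ?_⟩
            · rw [Walk.support_cons]
              exact List.mem_cons_of_mem _ W.start_mem_support
            · rw [Walk.support_cons]
      omega
  | top2 p v u1 u2 hadj htop hb hc1 hc2 ih1 ih2 =>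
    rintro v' hv' N
    obtain rfl : v = v' := by injection hv'
    match u2 with
    | none =>
      simp only [optVal] at hb
      have hk : leafBend M p v = 0 := by omega
      rw [hk]
      exact Nat.zero_le _
    | some b =>
      match u1 with
      | none => exact absurd htop.1 (by simp)
      | some a =>
        obtain ⟨hva, hap, hvb, hbp, hab, hba, -⟩ := htop
        simp only [optVal] at hb
        have hk : leafBend M p v = leafBend M v b + 1 := by exact_mod_cast hb
        have hma : leafBend M v b ≤ leafBend N v a := hba.trans (ih1 a rfl N)
        have hmb : leafBend M v b ≤ leafBend N v b := ih2 b rfl N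
        obtain ⟨c, hvc, hcp, hmc, hbendpvc⟩ :
            ∃ c, G.Adj v c ∧ c ≠ p ∧ leafBend M v b ≤ leafBend N v c ∧
              bendAt N.toFun p v c := by
          rcases N.axisAligned hadj with ⟨hpv1, -⟩ | ⟨hpv2, -⟩
          · by_cases ha2 : (N.toFun v).2 = (N.toFun a).2
            · exact ⟨a, hva, hap, hma, Or.inl ⟨hpv1, ha2⟩⟩
            · have ha1 : (N.toFun v).1 = (N.toFun a).1 := by
                rcases N.axisAligned hva with ⟨h, -⟩ | ⟨h, -⟩
                · exact h
                · exact absurd h ha2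
              by_cases hb2 : (N.toFun v).2 = (N.toFun b).2
              · exact ⟨b, hvb, hbp, hmb, Or.inl ⟨hpv1, hb2⟩⟩
              · have hb1 : (N.toFun v).1 = (N.toFun b).1 := by
                  rcases N.axisAligned hvb with ⟨h, -⟩ | ⟨h, -⟩
                  · exact h
                  · exact absurd h hb2
                exact absurd (no_three_vert N hadj.symm hva hvb
                  (Ne.symm hap) (Ne.symm hbp) hab hpv1.symm ha1 hb1) (by simp)
          · by_cases ha1 : (N.toFun v).1 = (N.toFun a).1
            · exact ⟨a, hva, hap, hma, Or.inr ⟨hpv2, ha1⟩⟩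
            · have ha2 : (N.toFun v).2 = (N.toFun a).2 := by
                rcases N.axisAligned hva with ⟨h, -⟩ | ⟨h, -⟩
                · exact absurd h ha1
                · exact h
              by_cases hb1 : (N.toFun v).1 = (N.toFun b).1
              · exact ⟨b, hvb, hbp, hmb, Or.inr ⟨hpv2, hb1⟩⟩
              · have hb2 : (N.toFun v).2 = (N.toFun b).2 := by
                  rcases N.axisAligned hvb with ⟨h, -⟩ | ⟨h, -⟩
                  · exact absurd h hb1
                  · exact h
                exact absurd (no_three_horiz N hadj.symm hva hvb
                  (Ne.symm hap) (Ne.symm hbp) hab hpv2.symm ha2 hb2) (by simp)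
        obtain ⟨f, W, hWp, hf, hcW, hbends⟩ := leafBend_spec hT N hvc
        obtain ⟨D, hWD⟩ := eq_cons_of_mem hT hvc W hWp hcW
        have hpW : p ∉ W.support := start_not_mem hT hadj hWp hvc hcp hcW
        have hsupp : W.support = v :: c :: D.support.tail := by
          rw [hWD, Walk.support_cons]
          congr 1
          exact D.support_eq_cons
        have hbb : bends N.toFun (p :: W.support) = bends N.toFun W.support + 1 := by
          rw [bends_cons]
          have : hbend N.toFun p W.support = 1 := by
            rw [hsupp]
            simp only [hbend, if_pos hbendpvc]
          omega
        calc leafBend M p v = leafBend M v b + 1 := hk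
          _ ≤ bends N.toFun W.support + 1 := by omega
          _ = bends N.toFun (p :: W.support) := hbb.symm
          _ ≤ leafBend N p v := by
            refine le_leafBend N ⟨f, Walk.cons hadj W, hWp.cons hpW, hf, ?_, ?_⟩
            · rw [Walk.support_cons]
              exact List.mem_cons_of_mem _ W.start_mem_support
            · rw [Walk.support_cons]

private lemma bendNum_bdd (N : SModel G) :
    BddAbove {n | ∃ (a b : V) (W : G.Walk a b), W.IsPath ∧ G.degree a = 1 ∧ G.degree b = 1 ∧
      bends N.toFun W.support = n} := by
  refine ⟨Fintype.card V, ?_⟩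
  rintro n ⟨a, b, W, hW, -, -, rfl⟩
  have h1 := hW.length_lt
  have h2 := bends_le_length N.toFun W.support
  rw [Walk.length_support] at h2
  omega

private lemma leafBend_le_bendNum (hT : G.IsTree) (N : SModel G) {p v : V}
    (hpv : G.Adj p v) : leafBend N p v ≤ bendNum N := by
  obtain ⟨f, W, hW, hf, hvW, hbends⟩ := leafBend_spec hT N hpv
  have hWnn : ¬W.Nil := by
    intro hn
    rw [Walk.nil_iff_support_eq] at hn
    rw [hn] at hvW
    simp at hvW
    exact hpv.ne hvW.symm
  have hWr : W.reverse.IsPath := hW.reverse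
  have hnnr : ¬W.reverse.Nil := by
    rw [Walk.not_nil_iff_lt_length, Walk.length_reverse]
    rwa [Walk.not_nil_iff_lt_length] at hWnn
  obtain ⟨g, X, hZrp, hg⟩ := exists_extension hT (Fintype.card V) W.reverse hWr hnnr
    (Nat.sub_le _ _)
  have hZeq : X.reverse.append W = (W.reverse.append X).reverse := by
    rw [Walk.reverse_append, Walk.reverse_reverse]
  have hZp : (X.reverse.append W).IsPath := by
    rw [hZeq]
    exact hZrp.reverse
  have hkey : (X.reverse.append W).support = X.support.tail.reverse ++ W.support := by
    calc (X.reverse.append W).support = X.support.reverse ++ W.support.tail := by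
          rw [Walk.support_append, Walk.support_reverse]
      _ = (X.support.tail.reverse ++ [p]) ++ W.support.tail := by
          conv_lhs => rw [X.support_eq_cons]
          rw [List.reverse_cons]
      _ = X.support.tail.reverse ++ W.support := by
          rw [List.append_assoc, List.singleton_append, ← W.support_eq_cons]
  have hle : bends N.toFun W.support ≤ bends N.toFun (X.reverse.append W).support := by
    rw [hkey]
    exact bends_suffix _ _ _
  have : bends N.toFun (X.reverse.append W).support ≤ bendNum N := by
    unfold bendNum
    exact le_csSup (bendNum_bdd N) ⟨g, f, X.reverse.append W, hZp, hg, hf, rfl⟩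
  omega

end AuxProof3

theorem stmt_5 {V : Type*} [Fintype V] (G : SimpleGraph V) [DecidableRel G.Adj]
    (hT : G.IsTree) (hdeg : ∀ v, G.degree v ≤ 4) (M : SModel G)
    (p v : V) (hpv : G.Adj p v) (hcrit : Critical M p (some v)) :
    leafBend M p v ≤ treeBendNum G := by
  have main := critical_le hT hcrit v rfl
  unfold treeBendNum
  refine le_csInf ⟨bendNum M, M, rfl⟩ ?_
  rintro n ⟨N, rfl⟩
  exact (main N).trans (leafBend_le_bendNum hT N hpv)
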